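/- Let x < y be real numbers, let α₁, α₂, α₃, α₄ satisfy 1 = α₁ > α₂ > α₃ > α₄ = 0, let a₁, a₂, a₃, a₄ be reals with a₁ + a₂ + a₃ + a₄ = 0, and suppose conditions (M1) and (E1) hold. If a₁ < −1 and a₁ + a₂ ≤ 0, then for every continuous convex function f : [x,y] → ℝ and every antiderivative F of f one has (1/(y−x)) ∫ₓʸ f(t) dt ≤ (Σ_{i=1}^{4} aᵢF(αᵢx + (1−αᵢ)y))/(y−x) ≤ (f(x)+f(y))/2. -/

import Mathlib

open Set MeasureTheory intervalIntegral

private lemma aux_integral_affine (m b u v : ℝ) :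
    (∫ t in u..v, (m * t + b)) = m * (v ^ 2 - u ^ 2) / 2 + b * (v - u) := by
  have h1 : (∫ t in u..v, (m * t + b)) = (∫ t in u..v, m * t) + ∫ t in u..v, (b:ℝ) :=
    intervalIntegral.integral_add
      ((continuous_const.mul continuous_id').intervalIntegrable u v) intervalIntegrable_const
  rw [h1, intervalIntegral.integral_const_mul, integral_id, intervalIntegral.integral_const,
    smul_eq_mul]
  ring

/-- the basic secant inequality in multiplied-out form -/
private lemma aux_secant {s : Set ℝ} {f : ℝ → ℝ} (hf : ConvexOn ℝ s f) {u v t : ℝ}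
    (hu : u ∈ s) (hv : v ∈ s) (huv : u < v) (ht1 : u ≤ t) (ht2 : t ≤ v) :
    (v - u) * f t ≤ (v - t) * f u + (t - u) * f v := by
  have hvu : (0:ℝ) < v - u := by linarith
  have hab : (v - t)/(v - u) + (t - u)/(v - u) = 1 := by field_simp; ring
  have h := hf.2 hu hv (div_nonneg (by linarith : (0:ℝ) ≤ v - t) hvu.le)
    (div_nonneg (by linarith : (0:ℝ) ≤ t - u) hvu.le) hab
  have hpt : (v - t)/(v - u) * u + (t - u)/(v - u) * v = t := by
    field_simp; ring
  simp only [smul_eq_mul, hpt] at h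
  have h2 : (v - u) * f t ≤ (v - u) * ((v - t)/(v - u) * f u + (t - u)/(v - u) * f v) :=
    (mul_le_mul_iff_right₀ hvu).2 h
  calc (v - u) * f t ≤ (v - u) * ((v - t)/(v - u) * f u + (t - u)/(v - u) * f v) := h2
    _ = (v - t) * f u + (t - u) * f v := by field_simp

private lemma aux_sign_nonneg {d P R : ℝ} (h : d * P = R) (hP : 0 < P) (hR : 0 ≤ R) :
    0 ≤ d := by
  by_contra hd
  push_neg at hd
  nlinarith

private lemma aux_sign_nonpos {d P R : ℝ} (h : d * P = R) (hP : 0 < P) (hR : R ≤ 0) :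
    d ≤ 0 := by
  by_contra hd
  push_neg at hd
  nlinarith

set_option maxHeartbeats 1600000 in
theorem stmt_13 (x y : ℝ) (hxy : x < y) (α₁ α₂ α₃ α₄ a₁ a₂ a₃ a₄ : ℝ)
    (hα₁ : α₁ = 1) (h12 : α₂ < α₁) (h23 : α₃ < α₂) (h34 : α₄ < α₃) (hα₄ : α₄ = 0)
    (ha : a₁ + a₂ + a₃ + a₄ = 0)
    (hM1 : a₁ * (α₂ - α₁) + (a₁ + a₂) * (α₃ - α₂) + (a₁ + a₂ + a₃) * (α₄ - α₃) = 1)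
    (hE1 : a₁ * (α₂ ^ 2 - α₁ ^ 2) + (a₁ + a₂) * (α₃ ^ 2 - α₂ ^ 2)
        + (a₁ + a₂ + a₃) * (α₄ ^ 2 - α₃ ^ 2) = 1)
    (ha₁ : a₁ < -1) (ha₁₂ : a₁ + a₂ ≤ 0)
    (f F : ℝ → ℝ)
    (hf_cont : ContinuousOn f (Set.Icc x y)) (hf_conv : ConvexOn ℝ (Set.Icc x y) f)
    (hF : ∀ t ∈ Set.Icc x y, HasDerivWithinAt F (f t) (Set.Icc x y) t) :
    (1 / (y - x)) * (∫ t in x..y, f t)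
        ≤ (a₁ * F (α₁ * x + (1 - α₁) * y) + a₂ * F (α₂ * x + (1 - α₂) * y)
          + a₃ * F (α₃ * x + (1 - α₃) * y) + a₄ * F (α₄ * x + (1 - α₄) * y)) / (y - x) ∧
      (a₁ * F (α₁ * x + (1 - α₁) * y) + a₂ * F (α₂ * x + (1 - α₂) * y)
          + a₃ * F (α₃ * x + (1 - α₃) * y) + a₄ * F (α₄ * x + (1 - α₄) * y)) / (y - x)
        ≤ (f x + f y) / 2 := by
  subst hα₁ hα₄
  have hyx : (0:ℝ) < y - x := by linarith
  have hα₃0 : 0 < α₃ := h34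
  have hα₂0 : 0 < α₂ := lt_trans h34 h23
  have hα₂1 : α₂ < 1 := h12
  have hα₃1 : α₃ < 1 := lt_trans h23 h12
  -- algebraic consequences of the moment conditions
  have key2 : ((-(a₁+a₂)) - 1) * ((α₂ - α₃) * α₂) = -((-a₁) - 1) * ((1 - α₂) * (1 + α₂ - α₃)) := by
    linear_combination (-α₃) * hM1 + hE1
  have key3 : (a₄ - 1) * (α₂ * α₃) = ((-a₁) - 1) * ((1 - α₂) * (1 - α₃)) := by
    linear_combination (α₂ + α₃) * hM1 - hE1 + α₂ * α₃ * ha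
  have cMId1 : (-a₁) * ((α₂ * x + (1 - α₂) * y) - x)
      + (-(a₁+a₂)) * ((α₃ * x + (1 - α₃) * y) - (α₂ * x + (1 - α₂) * y))
      + a₄ * (y - (α₃ * x + (1 - α₃) * y)) = y - x := by
    linear_combination (y - x) * hM1 + α₃ * (y - x) * ha
  have cMId2 : (-a₁) * ((α₂ * x + (1 - α₂) * y) ^ 2 - x ^ 2)
      + (-(a₁+a₂)) * ((α₃ * x + (1 - α₃) * y) ^ 2 - (α₂ * x + (1 - α₂) * y) ^ 2)
      + a₄ * (y ^ 2 - (α₃ * x + (1 - α₃) * y) ^ 2) = y ^ 2 - x ^ 2 := by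
    linear_combination (2*y*(y-x)) * hM1 - (y-x)^2 * hE1
      + (y^2 - (α₃ * x + (1 - α₃) * y)^2) * ha
  set p := α₂ * x + (1 - α₂) * y with hp
  set q := α₃ * x + (1 - α₃) * y with hq
  have hxp : x < p := by rw [hp]; nlinarith [mul_pos (by linarith : (0:ℝ) < 1 - α₂) hyx]
  have hpq : p < q := by rw [hp, hq]; nlinarith [mul_pos (by linarith : (0:ℝ) < α₂ - α₃) hyx]
  have hqy : q < y := by rw [hq]; nlinarith [mul_pos hα₃0 hyx]
  have hd₁ : (0:ℝ) < (-a₁) - 1 := by linarith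
  have hd₂ : (-(a₁+a₂)) - 1 ≤ 0 :=
    aux_sign_nonpos key2 (mul_pos (by linarith : (0:ℝ) < α₂ - α₃) hα₂0)
      (by nlinarith [mul_pos hd₁ (mul_pos (by linarith : (0:ℝ) < 1 - α₂)
        (by linarith : (0:ℝ) < 1 + α₂ - α₃))])
  have hd₃ : (0:ℝ) ≤ a₄ - 1 :=
    aux_sign_nonneg key3 (mul_pos hα₂0 hα₃0)
      (le_of_lt (mul_pos hd₁ (mul_pos (by linarith : (0:ℝ) < 1 - α₂)
        (by linarith : (0:ℝ) < 1 - α₃))))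
  have hc₂ : (0:ℝ) ≤ -(a₁+a₂) := by linarith
  -- membership facts
  have hpmem : p ∈ Set.Icc x y := ⟨hxp.le, by linarith⟩
  have hqmem : q ∈ Set.Icc x y := ⟨by linarith, hqy.le⟩
  have hxmem : x ∈ Set.Icc x y := ⟨le_refl x, hxy.le⟩
  have hymem : y ∈ Set.Icc x y := ⟨hxy.le, le_refl y⟩
  -- integrability
  have hIntf : ∀ u v : ℝ, x ≤ u → u ≤ v → v ≤ y → IntervalIntegrable f volume u v := by
    intro u v hu huv hv
    exact (hf_cont.mono
      (by rw [Set.uIcc_of_le huv]; exact Set.Icc_subset_Icc hu hv)).intervalIntegrable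
  -- FTC
  have hFcont : ContinuousOn F (Set.Icc x y) := fun t ht => (hF t ht).continuousWithinAt
  have hPrim : ∀ u v : ℝ, x ≤ u → u ≤ v → v ≤ y → (∫ t in u..v, f t) = F v - F u := by
    intro u v hu huv hv
    apply integral_eq_sub_of_hasDeriv_right_of_le huv
    · exact hFcont.mono (Set.Icc_subset_Icc hu hv)
    · intro t ht
      have htxy : t ∈ Set.Ioo x y := ⟨lt_of_le_of_lt hu ht.1, lt_of_lt_of_le ht.2 hv⟩
      exact ((hF t (Set.Ioo_subset_Icc_self htxy)).hasDerivAt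
        (Icc_mem_nhds htxy.1 htxy.2)).hasDerivWithinAt
    · exact hIntf u v hu huv hv
  have hP1 : (∫ t in x..p, f t) = F p - F x := hPrim x p le_rfl hxp.le (by linarith)
  have hP2 : (∫ t in p..q, f t) = F q - F p := hPrim p q hxp.le hpq.le (by linarith)
  have hP3 : (∫ t in q..y, f t) = F y - F q := hPrim q y (by linarith) hqy.le le_rfl
  have hPxy : (∫ t in x..y, f t) = F y - F x := hPrim x y le_rfl hxy.le le_rfl
  set I₁ := ∫ t in x..p, f t with hI₁
  set I₂ := ∫ t in p..q, f t with hI₂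
  set I₃ := ∫ t in q..y, f t with hI₃
  -- the inner secant line through (p, f p), (q, f q)
  set m := (f q - f p) / (q - p) with hm
  have hmq : m * (q - p) = f q - f p := by
    rw [hm]; exact div_mul_cancel₀ _ (sub_ne_zero.mpr (ne_of_gt hpq))
  set b := f p - m * p with hb
  have hlin_int : ∀ u v : ℝ, IntervalIntegrable (fun t => m * t + b) volume u v :=
    fun u v => ((continuous_const.mul continuous_id).add continuous_const).intervalIntegrable u v
  have e : ∀ t : ℝ, (q - p) * (m * t + b) = (q - t) * f p + (t - p) * f q := by
    intro t; rw [hb]; linear_combination (t - p) * hmq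
  -- pointwise bounds versus the inner secant
  have hpt1 : ∀ t ∈ Set.Icc x p, m * t + b ≤ f t := by
    intro t ht
    have hs := aux_secant (u := t) (v := q) (t := p) hf_conv
      (⟨ht.1, by linarith [ht.2]⟩ : t ∈ Set.Icc x y) hqmem
      (by linarith [ht.2]) ht.2 hpq.le
    exact le_of_mul_le_mul_left (by rw [e t]; linarith [hs]) (by linarith : (0:ℝ) < q - p)
  have hpt2 : ∀ t ∈ Set.Icc p q, f t ≤ m * t + b := by
    intro t ht
    have hs := aux_secant hf_conv hpmem hqmem hpq ht.1 ht.2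
    exact le_of_mul_le_mul_left (by rw [e t]; linarith [hs]) (by linarith : (0:ℝ) < q - p)
  have hpt3 : ∀ t ∈ Set.Icc q y, m * t + b ≤ f t := by
    intro t ht
    have hs := aux_secant (u := p) (v := t) (t := q) hf_conv hpmem
      (⟨by linarith [ht.1], ht.2⟩ : t ∈ Set.Icc x y)
      (by linarith [ht.1]) hpq.le ht.1
    exact le_of_mul_le_mul_left (by rw [e t]; linarith [hs]) (by linarith : (0:ℝ) < q - p)
  -- the outer secant line through (x, f x), (y, f y)
  set m₀ := (f y - f x) / (y - x) with hm₀
  have hm₀q : m₀ * (y - x) = f y - f x := by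
    rw [hm₀]; exact div_mul_cancel₀ _ (ne_of_gt hyx)
  set b₀ := f x - m₀ * x with hb₀
  have hlin₀_int : ∀ u v : ℝ, IntervalIntegrable (fun t => m₀ * t + b₀) volume u v :=
    fun u v => ((continuous_const.mul continuous_id).add continuous_const).intervalIntegrable u v
  have e₀ : ∀ t : ℝ, (y - x) * (m₀ * t + b₀) = (y - t) * f x + (t - x) * f y := by
    intro t; rw [hb₀]; linear_combination (t - x) * hm₀q
  have hpt0 : ∀ t ∈ Set.Icc x y, f t ≤ m₀ * t + b₀ := by
    intro t ht
    have hs := aux_secant hf_conv hxmem hymem hxy ht.1 ht.2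
    exact le_of_mul_le_mul_left (by rw [e₀ t]; linarith [hs]) hyx
  -- integral comparisons
  have hA1 : (∫ t in x..p, (m * t + b)) ≤ I₁ :=
    integral_mono_on hxp.le (hlin_int x p) (hIntf x p le_rfl hxp.le (by linarith)) hpt1
  have hA2 : I₂ ≤ ∫ t in p..q, (m * t + b) :=
    integral_mono_on hpq.le (hIntf p q hxp.le hpq.le (by linarith)) (hlin_int p q) hpt2
  have hA3 : (∫ t in q..y, (m * t + b)) ≤ I₃ :=
    integral_mono_on hqy.le (hlin_int q y) (hIntf q y (by linarith) hqy.le le_rfl) hpt3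
  have hB1 : I₁ ≤ ∫ t in x..p, (m₀ * t + b₀) :=
    integral_mono_on hxp.le (hIntf x p le_rfl hxp.le (by linarith)) (hlin₀_int x p)
      (fun t ht => hpt0 t ⟨ht.1, by linarith [ht.2]⟩)
  have hB2 : I₂ ≤ ∫ t in p..q, (m₀ * t + b₀) :=
    integral_mono_on hpq.le (hIntf p q hxp.le hpq.le (by linarith)) (hlin₀_int p q)
      (fun t ht => hpt0 t ⟨by linarith [ht.1], by linarith [ht.2]⟩)
  have hB3 : I₃ ≤ ∫ t in q..y, (m₀ * t + b₀) :=
    integral_mono_on hqy.le (hIntf q y (by linarith) hqy.le le_rfl) (hlin₀_int q y)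
      (fun t ht => hpt0 t ⟨by linarith [ht.1], ht.2⟩)
  rw [aux_integral_affine m b x p] at hA1
  rw [aux_integral_affine m b p q] at hA2
  rw [aux_integral_affine m b q y] at hA3
  rw [aux_integral_affine m₀ b₀ x p] at hB1
  rw [aux_integral_affine m₀ b₀ p q] at hB2
  rw [aux_integral_affine m₀ b₀ q y] at hB3
  -- rewrite the F-sum
  have e1 : (1:ℝ) * x + (1 - 1) * y = x := by ring
  have e4 : (0:ℝ) * x + (1 - 0) * y = y := by ring
  rw [e1, e4]
  have hS : a₁ * F x + a₂ * F p + a₃ * F q + a₄ * F y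
      = (-a₁) * I₁ + (-(a₁+a₂)) * I₂ + a₄ * I₃ := by
    rw [hP1, hP2, hP3]; linear_combination (F q) * ha
  -- the two moment identities in secant-integral form
  have hLsum : ((-a₁) - 1) * (m * (p ^ 2 - x ^ 2) / 2 + b * (p - x))
      + ((-(a₁+a₂)) - 1) * (m * (q ^ 2 - p ^ 2) / 2 + b * (q - p))
      + (a₄ - 1) * (m * (y ^ 2 - q ^ 2) / 2 + b * (y - q)) = 0 := by
    linear_combination (m/2) * cMId2 + b * cMId1
  have hMsum : (-a₁) * (m₀ * (p ^ 2 - x ^ 2) / 2 + b₀ * (p - x))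
      + (-(a₁+a₂)) * (m₀ * (q ^ 2 - p ^ 2) / 2 + b₀ * (q - p))
      + a₄ * (m₀ * (y ^ 2 - q ^ 2) / 2 + b₀ * (y - q)) = (f x + f y) / 2 * (y - x) := by
    rw [hb₀]
    linear_combination (m₀/2) * cMId2 + (f x - m₀ * x) * cMId1 + ((y - x)/2) * hm₀q
  constructor
  · -- lower bound
    have hkey : I₁ + I₂ + I₃ ≤ (-a₁) * I₁ + (-(a₁+a₂)) * I₂ + a₄ * I₃ := by
      have t1 := mul_le_mul_of_nonneg_left hA1 hd₁.le
      have t2 := mul_le_mul_of_nonpos_left hA2 hd₂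
      have t3 := mul_le_mul_of_nonneg_left hA3 hd₃
      linarith [t1, t2, t3, hLsum]
    rw [hPxy, hS]
    have hsum : F y - F x = I₁ + I₂ + I₃ := by rw [hP1, hP2, hP3]; ring
    rw [show (1:ℝ)/(y-x) * (F y - F x) = (F y - F x)/(y - x) by ring]
    exact (div_le_div_iff_of_pos_right hyx).2 (by linarith [hkey, hsum])
  · -- upper bound
    rw [hS, div_le_iff₀ hyx]
    have hc₁ : (0:ℝ) ≤ -a₁ := by linarith
    have hc₃ : (0:ℝ) ≤ a₄ := by linarith
    have t1 := mul_le_mul_of_nonneg_left hB1 hc₁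
    have t2 := mul_le_mul_of_nonneg_left hB2 hc₂
    have t3 := mul_le_mul_of_nonneg_left hB3 hc₃
    linarith [t1, t2, t3, hMsum]
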